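/- For every natural number n, the number of pairs (a,b) ∈ ℤ² with a² + b² = 5ⁿ equals 4(n+1). -/

import Mathlib

open GaussianInt Zsqrtd

private def gA : GaussianInt := ⟨2,1⟩
private def gB : GaussianInt := ⟨2,-1⟩
private def gJ : GaussianInt := ⟨0,1⟩

set_option maxHeartbeats 1000000 in
set_option synthInstance.maxHeartbeats 400000 in
private lemma prime_of_norm_five (z : GaussianInt) (hn : z.norm = 5) : Prime z := by
  rw [← irreducible_iff_prime]
  constructor
  · intro h
    have := Zsqrtd.norm_eq_one_iff.2 h
    rw [hn] at this; simp at this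
  · intro a b hab
    have h5 : (a.norm * b.norm).natAbs = 5 := by rw [← Zsqrtd.norm_mul, ← hab, hn]; rfl
    rw [Int.natAbs_mul] at h5
    rcases (Nat.prime_five).eq_one_or_self_of_dvd a.norm.natAbs ⟨_, h5.symm⟩ with h | h
    · exact Or.inl (Zsqrtd.norm_eq_one_iff.1 h)
    · refine Or.inr (Zsqrtd.norm_eq_one_iff.1 ?_)
      rw [h] at h5; omega

private lemma primeA : Prime gA := prime_of_norm_five _ (by decide)
private lemma primeB : Prime gB := prime_of_norm_five _ (by decide)

private lemma gnorm_pow (x : GaussianInt) (m : ℕ) : (x ^ m).norm = x.norm ^ m := by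
  induction m with
  | zero => simp
  | succ m ih => rw [pow_succ, pow_succ, Zsqrtd.norm_mul, ih]

private lemma unit_rep (z : GaussianInt) (hz : z.norm = 1) : ∃ k < 4, z = gJ ^ k := by
  obtain ⟨r, s⟩ := z
  have h1 : r * r + s * s = 1 := by simpa [Zsqrtd.norm] using hz
  have h2 : -1 ≤ r ∧ r ≤ 1 := by constructor <;> nlinarith
  have h3 : -1 ≤ s ∧ s ≤ 1 := by constructor <;> nlinarith
  obtain ⟨hr1, hr2⟩ := h2; obtain ⟨hs1, hs2⟩ := h3
  interval_cases r <;> interval_cases s <;> simp_all <;>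
    first
    | exact ⟨0, by norm_num, by decide⟩
    | exact ⟨1, by norm_num, by decide⟩
    | exact ⟨2, by norm_num, by decide⟩
    | exact ⟨3, by norm_num, by decide⟩

private lemma rep (n : ℕ) : ∀ z : GaussianInt, z.norm = 5 ^ n →
    ∃ k < 4, ∃ a ≤ n, z = gJ ^ k * gA ^ a * gB ^ (n - a) := by
  induction n with
  | zero =>
    intro z hz
    obtain ⟨k, hk, hzk⟩ := unit_rep z (by simpa using hz)
    exact ⟨k, hk, 0, le_refl 0, by simpa using hzk⟩
  | succ n ih =>
    intro z hz
    have h5 : (5 : GaussianInt) = gA * gB := by decide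
    have hdvd : gA ∣ z * star z := by
      have hc : (z.norm : GaussianInt) = z * star z := Zsqrtd.norm_eq_mul_conj z
      rw [← hc, hz]
      push_cast
      exact dvd_pow (Dvd.intro _ (by rw [← h5])) (Nat.succ_ne_zero n)
    rcases primeA.2.2 _ _ hdvd with h | h
    · obtain ⟨w, rfl⟩ := h
      have hw : w.norm = 5 ^ n := by
        have : (5 : ℤ) * w.norm = 5 * 5 ^ n := by
          rw [← pow_succ']
          rw [Zsqrtd.norm_mul] at hz
          simpa [show gA.norm = 5 by decide] using hz
        exact mul_left_cancel₀ (by norm_num) this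
      obtain ⟨k, hk, a, ha, rfl⟩ := ih w hw
      refine ⟨k, hk, a + 1, by omega, ?_⟩
      have : n + 1 - (a + 1) = n - a := by omega
      rw [this, pow_succ]
      ring
    · obtain ⟨c, hc⟩ := h
      have hB : gB ∣ z := ⟨star c, by
        have hstar : gB = star gA := by decide
        rw [hstar, ← star_mul', ← hc, star_star]⟩
      obtain ⟨w, rfl⟩ := hB
      have hw : w.norm = 5 ^ n := by
        have : (5 : ℤ) * w.norm = 5 * 5 ^ n := by
          rw [← pow_succ']
          rw [Zsqrtd.norm_mul] at hz
          simpa [show gB.norm = 5 by decide] using hz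
        exact mul_left_cancel₀ (by norm_num) this
      obtain ⟨k, hk, a, ha, rfl⟩ := ih w hw
      refine ⟨k, hk, a, by omega, ?_⟩
      have : n + 1 - a = (n - a) + 1 := by omega
      rw [this, pow_succ]
      ring

private lemma notdvd_J : ¬ gA ∣ gJ := by
  rintro ⟨c, hc⟩
  have := congrArg Zsqrtd.norm hc
  rw [Zsqrtd.norm_mul] at this
  have h1 : gJ.norm = 1 := by decide
  have h2 : gA.norm = 5 := by decide
  rw [h1, h2] at this
  omega

private lemma notdvd_B : ¬ gA ∣ gB := by
  rintro ⟨c, hc⟩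
  have hn := congrArg Zsqrtd.norm hc
  rw [Zsqrtd.norm_mul] at hn
  have h1 : gB.norm = 5 := by decide
  have h2 : gA.norm = 5 := by decide
  rw [h1, h2] at hn
  have hc1 : c.norm = 1 := by omega
  obtain ⟨k, hk, rfl⟩ := unit_rep c hc1
  interval_cases k <;> revert hc <;> decide

private lemma key_inj (n k k' a a' : ℕ) (hk : k < 4) (hk' : k' < 4)
    (ha' : a' ≤ n) (hle : a ≤ a')
    (h : gJ ^ k * gA ^ a * gB ^ (n - a) = gJ ^ k' * gA ^ a' * gB ^ (n - a')) :
    k = k' ∧ a = a' := by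
  obtain ⟨d, hd⟩ : ∃ d, a' = a + d := ⟨a' - a, by omega⟩
  have eB : gB ^ (n - a) = gB ^ (n - a') * gB ^ d := by
    rw [show n - a = (n - a') + d from by omega, pow_add]
  have eA : gA ^ a' = gA ^ a * gA ^ d := by
    rw [hd, pow_add]
  rw [eB, eA] at h
  have hAne : gA ≠ 0 := by decide
  have hBne : gB ≠ 0 := by decide
  have hcancel : gJ ^ k * gB ^ d = gJ ^ k' * gA ^ d := by
    have hne : gA ^ a * gB ^ (n - a') ≠ 0 :=
      mul_ne_zero (pow_ne_zero _ hAne) (pow_ne_zero _ hBne)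
    apply mul_left_cancel₀ hne
    linear_combination h
  have hd0 : d = 0 := by
    by_contra hd0
    have hAd : gA ∣ gJ ^ k * gB ^ d := by
      rw [hcancel]
      exact Dvd.dvd.mul_left (dvd_pow_self gA hd0) _
    rcases primeA.2.2 _ _ hAd with h' | h'
    · exact notdvd_J (primeA.dvd_of_dvd_pow h')
    · exact notdvd_B (primeA.dvd_of_dvd_pow h')
  rw [hd0] at hcancel
  simp only [pow_zero, mul_one] at hcancel
  refine ⟨?_, by omega⟩
  interval_cases k <;> interval_cases k' <;> revert hcancel <;> decide

private noncomputable def gmap (n : ℕ) (q : Fin 4 × Fin (n + 1)) : GaussianInt :=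
  gJ ^ (q.1 : ℕ) * gA ^ (q.2 : ℕ) * gB ^ (n - (q.2 : ℕ))

private lemma gmap_inj (n : ℕ) : Function.Injective (gmap n) := by
  rintro ⟨k, a⟩ ⟨k', a'⟩ h
  have ha : (a : ℕ) ≤ n := by omega
  have ha' : (a' : ℕ) ≤ n := by omega
  rcases le_total (a : ℕ) (a' : ℕ) with hle | hle
  · obtain ⟨h1, h2⟩ := key_inj n k k' a a' k.isLt k'.isLt ha' hle h
    simp only [Prod.mk.injEq]
    exact ⟨Fin.ext h1, Fin.ext h2⟩
  · obtain ⟨h1, h2⟩ := key_inj n k' k a' a k'.isLt k.isLt ha hle h.symm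
    simp only [Prod.mk.injEq]
    exact ⟨Fin.ext h1.symm, Fin.ext h2.symm⟩

private lemma set_eq (n : ℕ) :
    {z : GaussianInt | z.norm = 5 ^ n} = Set.range (gmap n) := by
  ext z
  simp only [Set.mem_setOf_eq, Set.mem_range]
  constructor
  · intro hz
    obtain ⟨k, hk, a, ha, rfl⟩ := rep n z hz
    exact ⟨(⟨k, hk⟩, ⟨a, by omega⟩), rfl⟩
  · rintro ⟨⟨k, a⟩, rfl⟩
    show (gJ ^ (k : ℕ) * gA ^ (a : ℕ) * gB ^ (n - (a : ℕ))).norm = 5 ^ n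
    rw [Zsqrtd.norm_mul, Zsqrtd.norm_mul, gnorm_pow, gnorm_pow, gnorm_pow]
    have h1 : gJ.norm = 1 := by decide
    have h2 : gA.norm = 5 := by decide
    have h3 : gB.norm = 5 := by decide
    rw [h1, h2, h3, one_pow, one_mul, ← pow_add]
    congr 1
    omega

/-- The number of pairs `(a,b) ∈ ℤ²` with `a² + b² = 5ⁿ` equals `4(n+1)`. -/
theorem card_lattice_points_five_pow (n : ℕ) :
    {p : ℤ × ℤ | p.1 ^ 2 + p.2 ^ 2 = 5 ^ n}.ncard = 4 * (n + 1) := by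
  have himg : {p : ℤ × ℤ | p.1 ^ 2 + p.2 ^ 2 = 5 ^ n} =
      (fun z : GaussianInt => (z.re, z.im)) '' {z : GaussianInt | z.norm = 5 ^ n} := by
    ext ⟨x, y⟩
    simp only [Set.mem_setOf_eq, Set.mem_image]
    constructor
    · intro h
      refine ⟨⟨x, y⟩, ?_, rfl⟩
      show Zsqrtd.norm ⟨x, y⟩ = 5 ^ n
      simp only [Zsqrtd.norm]
      linear_combination h
    · rintro ⟨z, hz, heq⟩
      have hx : z.re = x := congrArg Prod.fst heq
      have hy : z.im = y := congrArg Prod.snd heq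
      simp only [Zsqrtd.norm] at hz
      rw [← hx, ← hy]
      linear_combination hz
  rw [himg]
  rw [Set.ncard_image_of_injective _ (fun z w h => by
    obtain ⟨h1, h2⟩ := Prod.ext_iff.1 h
    exact Zsqrtd.ext h1 h2)]
  rw [set_eq, ← Set.image_univ, Set.ncard_image_of_injective _ (gmap_inj n),
    Set.ncard_univ]
  simp [Nat.card_eq_fintype_card]
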